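/- With T_x the block-diagonal matrix whose i-th diagonal block is the row vector x_{r_i}ᵀ G (where G = diag(1/√g_j)), the spectral norm satisfies ‖T_x‖₂ ≤ (1/√g_min) · max_{1≤i≤m} ‖x_{r_i}‖₂, and hence ‖T_x‖₂ ≤ (μ/√g_min) ‖x̂‖₁, where μ = min(√|N̄*| ‖U‖_MAX, 1) and x = U x̂. -/

import Mathlib

/-- Spectral-norm bound for the block-diagonal matrix `T_x` with blocks
`x_{r_i}ᵀ G`, `G = diag(1/√g_j)`: as an operator, `‖T_x v‖₂` is bounded by
`(1/√g_min) max_i ‖x_{r_i}‖₂ ‖v‖₂` and hence by `(μ/√g_min) ‖x̂‖₁ ‖v‖₂`, where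
`μ = min(√|N̄*| ‖U‖_MAX, 1)` and `x = U x̂`. -/
theorem stmt11 {m n : ℕ}
    (U : Matrix (Fin n) (Fin n) ℂ) (hU : U ∈ Matrix.unitaryGroup (Fin n) ℂ)
    (xhat : Fin n → ℂ) (x : Fin n → ℂ) (hx : x = U.mulVec xhat)
    (Nr : Fin m → Finset (Fin n))
    (g : Fin n → ℕ)
    (hg : ∀ j, g j = (Finset.univ.filter fun i : Fin m => j ∈ Nr i).card)
    (gmin : ℕ) (hgmin : ∀ j, gmin ≤ g j) (hgpos : 0 < gmin)
    (Nstar : ℕ) (hNstar : ∀ i, (Nr i).card ≤ Nstar)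
    (Umax : ℝ) (hUmax : ∀ i j, ‖U i j‖ ≤ Umax)
    (T : Matrix (Fin m) (Fin m × Fin n) ℂ)
    (hT : ∀ i p, T i p =
      if p.1 = i ∧ p.2 ∈ Nr i then x p.2 * (1 / (Real.sqrt (g p.2) : ℂ)) else 0)
    (μc : ℝ) (hμ : μc = min (Real.sqrt Nstar * Umax) 1) :
    ∀ v : Fin m × Fin n → ℂ,
      (Real.sqrt (∑ i, ‖T.mulVec v i‖ ^ 2) ≤
        (1 / Real.sqrt gmin) *
          (⨆ i : Fin m, Real.sqrt (∑ j ∈ Nr i, ‖x j‖ ^ 2)) *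
          Real.sqrt (∑ p, ‖v p‖ ^ 2)) ∧
      (Real.sqrt (∑ i, ‖T.mulVec v i‖ ^ 2) ≤
        (μc / Real.sqrt gmin) * (∑ i, ‖xhat i‖) *
          Real.sqrt (∑ p, ‖v p‖ ^ 2)) := by
  classical
  intro v
  set S : ℝ := ∑ i, ‖xhat i‖ with hSdef
  have hS0 : 0 ≤ S := Finset.sum_nonneg fun i _ => norm_nonneg _
  -- μc * S nonneg
  have hμS : 0 ≤ μc * S := by
    rcases isEmpty_or_nonempty (Fin n) with hn | hn
    · have : S = 0 := by simp [hSdef]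
      simp [this]
    · obtain ⟨j⟩ := hn
      have hU0 : 0 ≤ Umax := le_trans (norm_nonneg _) (hUmax j j)
      have : 0 ≤ μc := by
        rw [hμ]; exact le_min (by positivity) one_pos.le
      exact mul_nonneg this hS0
  -- norm preservation : ∑ |x j|² = ∑ |x̂ j|²
  have hpres : (∑ j, ‖x j‖ ^ 2) = ∑ j, ‖xhat j‖ ^ 2 := by
    have hdot : dotProduct (star x) x = dotProduct (star xhat) xhat := by
      rw [hx, Matrix.star_mulVec, Matrix.dotProduct_mulVec, Matrix.vecMul_vecMul,
        show U.conjTranspose * U = 1 from Matrix.mem_unitaryGroup_iff'.mp hU,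
        Matrix.vecMul_one]
    have h1 : ∀ z : ℂ, (starRingEnd ℂ) z * z = ((‖z‖ : ℝ) : ℂ) ^ 2 := by
      intro z
      rw [mul_comm, Complex.mul_conj, Complex.normSq_eq_norm_sq]
      push_cast
      ring
    have h2 : ((∑ j, ‖x j‖ ^ 2 : ℝ) : ℂ) =
        ((∑ j, ‖xhat j‖ ^ 2 : ℝ) : ℂ) := by
      push_cast
      simpa [dotProduct, h1] using hdot
    exact_mod_cast h2
  -- ℓ² ≤ ℓ¹ for xhat
  have hl2l1 : Real.sqrt (∑ j, ‖xhat j‖ ^ 2) ≤ S := by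
    rw [show S = Real.sqrt (S ^ 2) from (Real.sqrt_sq hS0).symm]
    exact Real.sqrt_le_sqrt (Finset.sum_sq_le_sq_sum_of_nonneg
      fun i _ => norm_nonneg _)
  -- pointwise bound |x j| ≤ Umax * S
  have hxj : ∀ j, ‖x j‖ ≤ Umax * S := by
    intro j
    rw [hx]
    calc ‖∑ k, U j k * xhat k‖ ≤ ∑ k, ‖U j k * xhat k‖ :=
          norm_sum_le _ _
      _ ≤ ∑ k, Umax * ‖xhat k‖ := by
          refine Finset.sum_le_sum fun k _ => ?_
          rw [norm_mul]
          exact mul_le_mul_of_nonneg_right (hUmax j k) (norm_nonneg _)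
      _ = Umax * S := by rw [hSdef, Finset.mul_sum]
  -- key per-block bound: √(Mi i) ≤ μc * S
  have Mkey : ∀ i : Fin m,
      Real.sqrt (∑ j ∈ Nr i, ‖x j‖ ^ 2) ≤ μc * S := by
    intro i
    rcases (Nr i).eq_empty_or_nonempty with he | hne
    · simp [he, hμS]
    · obtain ⟨j0, hj0⟩ := hne
      have hUS0 : 0 ≤ Umax * S := le_trans (norm_nonneg _) (hxj j0)
      have hb : Real.sqrt (∑ j ∈ Nr i, ‖x j‖ ^ 2) ≤
          Real.sqrt Nstar * Umax * S := by
        have h1 : (∑ j ∈ Nr i, ‖x j‖ ^ 2) ≤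
            (Nstar : ℝ) * (Umax * S) ^ 2 := by
          calc (∑ j ∈ Nr i, ‖x j‖ ^ 2)
              ≤ ∑ _j ∈ Nr i, (Umax * S) ^ 2 :=
                Finset.sum_le_sum fun j _ =>
                  pow_le_pow_left₀ (norm_nonneg _) (hxj j) 2
            _ = ((Nr i).card : ℝ) * (Umax * S) ^ 2 := by
                rw [Finset.sum_const, nsmul_eq_mul]
            _ ≤ (Nstar : ℝ) * (Umax * S) ^ 2 := by
                have : ((Nr i).card : ℝ) ≤ (Nstar : ℝ) := by exact_mod_cast hNstar i
                nlinarith [sq_nonneg (Umax * S)]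
        calc Real.sqrt (∑ j ∈ Nr i, ‖x j‖ ^ 2)
            ≤ Real.sqrt ((Nstar : ℝ) * (Umax * S) ^ 2) := Real.sqrt_le_sqrt h1
          _ = Real.sqrt Nstar * (Umax * S) := by
              rw [Real.sqrt_mul (Nat.cast_nonneg _), Real.sqrt_sq hUS0]
          _ = Real.sqrt Nstar * Umax * S := by ring
      have ha : Real.sqrt (∑ j ∈ Nr i, ‖x j‖ ^ 2) ≤ S := by
        refine le_trans ?_ hl2l1
        rw [← hpres]
        exact Real.sqrt_le_sqrt (Finset.sum_le_sum_of_subset_of_nonneg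
          (Finset.subset_univ _) fun j _ _ => sq_nonneg _)
      rw [hμ, min_mul_of_nonneg _ _ hS0, one_mul]
      exact le_min hb ha
  -- notation
  set Mi : Fin m → ℝ := fun i => ∑ j ∈ Nr i, ‖x j‖ ^ 2 with hMi
  set M : ℝ := ⨆ i : Fin m, Real.sqrt (Mi i) with hM
  set V : ℝ := ∑ p, ‖v p‖ ^ 2 with hV
  have hV0 : 0 ≤ V := Finset.sum_nonneg fun p _ => sq_nonneg _
  have hgm0 : (0:ℝ) < Real.sqrt gmin := Real.sqrt_pos.mpr (by exact_mod_cast hgpos)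
  rcases isEmpty_or_nonempty (Fin m) with hm | hm
  · have hA : (∑ i, ‖T.mulVec v i‖ ^ 2) = 0 := by simp
    have hM0 : M = 0 := Real.iSup_of_isEmpty _
    constructor
    · rw [hA, Real.sqrt_zero, hM0]
      positivity
    · rw [hA, Real.sqrt_zero]
      have heq : μc / Real.sqrt gmin * S * Real.sqrt V = (μc * S) * (Real.sqrt V / Real.sqrt gmin) := by ring
      rw [hV] at heq
      rw [heq]
      exact mul_nonneg hμS (by positivity)
  -- nonempty case
  haveI := hm
  obtain ⟨i0⟩ := id hm
  have hMi0 : ∀ i, 0 ≤ Mi i := fun i => Finset.sum_nonneg fun j _ => sq_nonneg _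
  have hbdd : BddAbove (Set.range fun i => Real.sqrt (Mi i)) :=
    Set.Finite.bddAbove (Set.finite_range _)
  have hMnn : 0 ≤ M := le_trans (Real.sqrt_nonneg (Mi i0)) (le_ciSup hbdd i0)
  -- mulVec formula
  have hmv : ∀ i : Fin m, T.mulVec v i =
      ∑ j ∈ Nr i, x j * (1 / (Real.sqrt (g j) : ℂ)) * v (i, j) := by
    intro i
    rw [Matrix.mulVec, dotProduct, Fintype.sum_prod_type]
    rw [Finset.sum_eq_single i]
    · rw [← Finset.sum_filter_add_sum_filter_not Finset.univ (fun j => j ∈ Nr i)]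
      have h2 : ∑ j ∈ Finset.univ.filter (fun j => ¬ j ∈ Nr i), T i (i, j) * v (i, j) = 0 := by
        refine Finset.sum_eq_zero fun j hj => ?_
        rw [hT]
        simp only [Finset.mem_filter] at hj
        simp [hj.2]
      rw [h2, add_zero]
      refine Finset.sum_congr (by simp [Finset.filter_mem_eq_inter]) fun j hj => ?_
      rw [hT]
      simp [hj]
    · intro a _ ha
      refine Finset.sum_eq_zero fun j _ => ?_
      rw [hT]
      simp [ha]
    · simp
  -- per-row Cauchy–Schwarz bound
  have key1 : ∀ i : Fin m, ‖T.mulVec v i‖ ^ 2 ≤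
      (1 / (gmin : ℝ)) * Mi i * ∑ j, ‖v (i, j)‖ ^ 2 := by
    intro i
    have h1 : ‖T.mulVec v i‖ ≤
        ∑ j ∈ Nr i, (‖x j‖ * (1 / Real.sqrt (g j))) * ‖v (i, j)‖ := by
      rw [hmv i]
      refine le_trans (norm_sum_le _ _) (Finset.sum_le_sum fun j _ => ?_)
      rw [norm_mul, norm_mul, norm_div, norm_one, Complex.norm_real, Real.norm_eq_abs,
        abs_of_nonneg (Real.sqrt_nonneg _)]
    have h2 : (∑ j ∈ Nr i, (‖x j‖ * (1 / Real.sqrt (g j))) * ‖v (i, j)‖) ^ 2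
        ≤ (∑ j ∈ Nr i, (‖x j‖ * (1 / Real.sqrt (g j))) ^ 2) *
          ∑ j ∈ Nr i, ‖v (i, j)‖ ^ 2 :=
      Finset.sum_mul_sq_le_sq_mul_sq _ _ _
    have h3 : (∑ j ∈ Nr i, (‖x j‖ * (1 / Real.sqrt (g j))) ^ 2) ≤
        (1 / (gmin : ℝ)) * Mi i := by
      rw [hMi, Finset.mul_sum]
      refine Finset.sum_le_sum fun j _ => ?_
      rw [mul_pow, div_pow, one_pow, Real.sq_sqrt (Nat.cast_nonneg _)]
      rw [mul_comm ((1:ℝ)/(gmin:ℝ))]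
      refine mul_le_mul_of_nonneg_left ?_ (sq_nonneg _)
      apply one_div_le_one_div_of_le
      · exact_mod_cast hgpos
      · exact_mod_cast hgmin j
    have h4 : ∑ j ∈ Nr i, ‖v (i, j)‖ ^ 2 ≤ ∑ j, ‖v (i, j)‖ ^ 2 :=
      Finset.sum_le_sum_of_subset_of_nonneg (Finset.subset_univ _) fun j _ _ => sq_nonneg _
    calc ‖T.mulVec v i‖ ^ 2
        ≤ (∑ j ∈ Nr i, (‖x j‖ * (1 / Real.sqrt (g j))) * ‖v (i, j)‖) ^ 2 :=
          pow_le_pow_left₀ (norm_nonneg _) h1 2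
      _ ≤ (∑ j ∈ Nr i, (‖x j‖ * (1 / Real.sqrt (g j))) ^ 2) *
          ∑ j ∈ Nr i, ‖v (i, j)‖ ^ 2 := h2
      _ ≤ ((1 / (gmin : ℝ)) * Mi i) * ∑ j, ‖v (i, j)‖ ^ 2 := by
          refine mul_le_mul h3 h4 (Finset.sum_nonneg fun j _ => sq_nonneg _) ?_
          positivity
      _ = (1 / (gmin : ℝ)) * Mi i * ∑ j, ‖v (i, j)‖ ^ 2 := by ring
  -- sum up
  have hMile : ∀ i, Mi i ≤ M ^ 2 := by
    intro i
    rw [← Real.sq_sqrt (hMi0 i)]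
    exact pow_le_pow_left₀ (Real.sqrt_nonneg _) (le_ciSup hbdd i) 2
  have hsum : (∑ i, ‖T.mulVec v i‖ ^ 2) ≤ (1 / (gmin : ℝ)) * M ^ 2 * V := by
    calc (∑ i, ‖T.mulVec v i‖ ^ 2)
        ≤ ∑ i, (1 / (gmin : ℝ)) * Mi i * ∑ j, ‖v (i, j)‖ ^ 2 :=
          Finset.sum_le_sum fun i _ => key1 i
      _ ≤ ∑ i, (1 / (gmin : ℝ)) * M ^ 2 * ∑ j, ‖v (i, j)‖ ^ 2 := by
          refine Finset.sum_le_sum fun i _ => ?_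
          have h5 : (0:ℝ) ≤ ∑ j, ‖v (i, j)‖ ^ 2 :=
            Finset.sum_nonneg fun j _ => sq_nonneg _
          exact mul_le_mul_of_nonneg_right (mul_le_mul_of_nonneg_left (hMile i) (by positivity)) h5
      _ = (1 / (gmin : ℝ)) * M ^ 2 * ∑ i, ∑ j, ‖v (i, j)‖ ^ 2 := by
          rw [← Finset.mul_sum]
      _ = (1 / (gmin : ℝ)) * M ^ 2 * V := by
          rw [hV, Fintype.sum_prod_type]
  have main1 : Real.sqrt (∑ i, ‖T.mulVec v i‖ ^ 2) ≤
      (1 / Real.sqrt gmin) * M * Real.sqrt V := by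
    calc Real.sqrt (∑ i, ‖T.mulVec v i‖ ^ 2)
        ≤ Real.sqrt ((1 / (gmin : ℝ)) * M ^ 2 * V) := Real.sqrt_le_sqrt hsum
      _ = (1 / Real.sqrt gmin) * M * Real.sqrt V := by
          rw [Real.sqrt_mul (by positivity), Real.sqrt_mul (by positivity),
            Real.sqrt_sq hMnn, one_div, Real.sqrt_inv, ← one_div]
  refine ⟨main1, ?_⟩
  have hMle : M ≤ μc * S := ciSup_le Mkey
  calc Real.sqrt (∑ i, ‖T.mulVec v i‖ ^ 2)
      ≤ (1 / Real.sqrt gmin) * M * Real.sqrt V := main1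
    _ ≤ (1 / Real.sqrt gmin) * (μc * S) * Real.sqrt V := by
        refine mul_le_mul_of_nonneg_right (mul_le_mul_of_nonneg_left hMle ?_) (Real.sqrt_nonneg _)
        positivity
    _ = (μc / Real.sqrt gmin) * S * Real.sqrt V := by ring
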